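/- Let X be a finite nonempty set, let 0 < α < 1, and let p be a probability distribution on X. Then the infimum over all strictly positive probability distributions r on X of the expected power score ∑_{x∈X} p(x) · (α · r(x)^{α−1} + (1−α) · ∑_{x'∈X} r(x')^α) equals ∑_{x∈X} p(x)^α. -/

import Mathlib

open Real BigOperators Finset

private lemma power_score_point (α : ℝ) (hα0 : 0 < α) (hα1 : α < 1)
    {p r : ℝ} (hp : 0 ≤ p) (hr : 0 < r) :
    p ^ α ≤ α * (p * r ^ (α - 1)) + (1 - α) * r ^ α := by
  have h := Real.geom_mean_le_arith_mean2_weighted (w₁ := α) (w₂ := 1 - α)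
    (le_of_lt hα0) (by linarith)
    (mul_nonneg hp (Real.rpow_nonneg hr.le (α - 1))) (Real.rpow_nonneg hr.le α)
    (by ring)
  have key : (p * r ^ (α - 1)) ^ α * (r ^ α) ^ (1 - α) = p ^ α := by
    rw [Real.mul_rpow hp (Real.rpow_nonneg hr.le _), ← Real.rpow_mul hr.le,
      ← Real.rpow_mul hr.le, mul_assoc, ← Real.rpow_add hr,
      show (α - 1) * α + α * (1 - α) = 0 by ring, Real.rpow_zero, mul_one]
  rw [key] at h
  exact h

private lemma power_score_rearrange {X : Type*} [Fintype X]
    (α : ℝ) (p : X → ℝ) (hp1 : (∑ x, p x) = 1) (r : X → ℝ) :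
    ∑ x, p x * (α * r x ^ (α - 1) + (1 - α) * ∑ x', r x' ^ α)
      = ∑ x, (α * (p x * r x ^ (α - 1)) + (1 - α) * r x ^ α) := by
  simp only [mul_add, Finset.sum_add_distrib]
  congr 1
  · exact Finset.sum_congr rfl fun x _ => by ring
  · rw [← Finset.sum_mul, hp1, one_mul, Finset.mul_sum]

/-- For `0 < α < 1`, the infimum over strictly positive distributions `r` of the expected
power score equals `∑ x, p x ^ α`. -/
theorem power_score_inf
    {X : Type*} [Fintype X] [Nonempty X]
    (α : ℝ) (hα0 : 0 < α) (hα1 : α < 1)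
    (p : X → ℝ) (hp : ∀ x, 0 ≤ p x) (hp1 : (∑ x, p x) = 1) :
    sInf {v : ℝ | ∃ r : X → ℝ, (∀ x, 0 < r x) ∧ (∑ x, r x) = 1 ∧
        v = ∑ x, p x * (α * r x ^ (α - 1) + (1 - α) * ∑ x', r x' ^ α)}
      = ∑ x, p x ^ α := by
  set S : Set ℝ := {v : ℝ | ∃ r : X → ℝ, (∀ x, 0 < r x) ∧ (∑ x, r x) = 1 ∧
        v = ∑ x, p x * (α * r x ^ (α - 1) + (1 - α) * ∑ x', r x' ^ α)} with hS
  set L : ℝ := ∑ x, p x ^ α with hL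
  -- lower bound
  have hlb : ∀ v ∈ S, L ≤ v := by
    rintro v ⟨r, hr, hr1, rfl⟩
    rw [power_score_rearrange α p hp1 r]
    exact Finset.sum_le_sum fun x _ => power_score_point α hα0 hα1 (hp x) (hr x)
  have hbdd : BddBelow S := ⟨L, hlb⟩
  -- the perturbed distributions
  have hcard : (0 : ℝ) < (Fintype.card X : ℝ) := by exact_mod_cast Fintype.card_pos
  set c : ℝ := ((Fintype.card X : ℝ))⁻¹ with hc
  have hcpos : 0 < c := inv_pos.mpr hcard
  set q : ℝ → X → ℝ := fun t x => (1 - t) * p x + t * c with hq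
  set V : ℝ → ℝ := fun t =>
    ∑ x, p x * (α * q t x ^ (α - 1) + (1 - α) * ∑ x', q t x' ^ α) with hV
  -- eventually V t ∈ S
  have hev : ∀ᶠ t in nhdsWithin (0 : ℝ) (Set.Ioi 0), V t ∈ S := by
    filter_upwards [Ioo_mem_nhdsGT_of_mem (by constructor <;> norm_num :
      (0 : ℝ) ∈ Set.Ico (0 : ℝ) 1)] with t ht
    refine ⟨q t, fun x => ?_, ?_, rfl⟩
    · have h1 : 0 ≤ (1 - t) * p x := mul_nonneg (by linarith [ht.2]) (hp x)
      have h2 : 0 < t * c := mul_pos ht.1 hcpos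
      simp only [hq]; linarith
    · simp only [hq]
      rw [Finset.sum_add_distrib, ← Finset.mul_sum, hp1, mul_one,
        Finset.sum_const, nsmul_eq_mul, Finset.card_univ, hc]
      field_simp
      ring
  -- V tends to L
  have hqt : ∀ x : X, Filter.Tendsto (fun t => q t x)
      (nhdsWithin (0 : ℝ) (Set.Ioi 0)) (nhds (p x)) := by
    intro x
    have : Filter.Tendsto (fun t : ℝ => (1 - t) * p x + t * c) (nhds 0)
        (nhds ((1 - 0) * p x + 0 * c)) := by
      exact ((continuous_const.sub continuous_id).mul continuous_const).add
        (continuous_id.mul continuous_const) |>.tendsto 0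
    simpa using this.mono_left nhdsWithin_le_nhds
  have hVtendsto : Filter.Tendsto V (nhdsWithin (0 : ℝ) (Set.Ioi 0)) (nhds L) := by
    have hrw : V = fun t => ∑ x, (α * (p x * q t x ^ (α - 1)) + (1 - α) * q t x ^ α) :=
      funext fun t => power_score_rearrange α p hp1 (q t)
    have hLrw : L = ∑ x, (α * p x ^ α + (1 - α) * p x ^ α) := by
      rw [hL]; exact Finset.sum_congr rfl fun x _ => by ring
    rw [hrw, hLrw]
    refine tendsto_finset_sum _ fun x _ => ?_
    have h2 : Filter.Tendsto (fun t => q t x ^ α)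
        (nhdsWithin (0 : ℝ) (Set.Ioi 0)) (nhds (p x ^ α)) :=
      (hqt x).rpow_const (Or.inr hα0.le)
    have h1 : Filter.Tendsto (fun t => p x * q t x ^ (α - 1))
        (nhdsWithin (0 : ℝ) (Set.Ioi 0)) (nhds (p x ^ α)) := by
      rcases eq_or_lt_of_le (hp x) with hpx | hpx
      · simp only [← hpx, zero_mul]
        rw [Real.zero_rpow hα0.ne']
        exact tendsto_const_nhds
      · have h3 : Filter.Tendsto (fun t => p x * q t x ^ (α - 1))
            (nhdsWithin (0 : ℝ) (Set.Ioi 0)) (nhds (p x * p x ^ (α - 1))) :=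
          tendsto_const_nhds.mul
            (Filter.Tendsto.rpow_const (p := α - 1) (hqt x) (Or.inl hpx.ne'))
        have heq : p x * p x ^ (α - 1) = p x ^ α := by
          have h4 := Real.rpow_add hpx 1 (α - 1)
          rw [Real.rpow_one] at h4
          rw [← h4, show (1 : ℝ) + (α - 1) = α by ring]
        rw [heq] at h3
        exact h3
    exact (tendsto_const_nhds.mul h1).add (tendsto_const_nhds.mul h2)
  have hne : S.Nonempty := by
    obtain ⟨t, ht⟩ := hev.exists
    exact ⟨V t, ht⟩
  refine le_antisymm ?_ (le_csInf hne hlb)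
  refine ge_of_tendsto hVtendsto ?_
  filter_upwards [hev] with t ht using csInf_le hbdd ht
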